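/- Let F : ℝ → ℝ be the map sending β ∈ ℝ to the value at time 1 of the solution of v' = f(t) − g(U, v), v(0) = β, where g is C¹ with g_min ≤ ∂g/∂v ≤ L₄. Then F is differentiable with e^{−L₄} ≤ F'(β) ≤ e^{−g_min} for all β; in particular F is strictly increasing and has a unique fixed point. -/

import Mathlib

open Real Set MeasureTheory Filter

section Aux

variable {gmin L₄ : ℝ}

private lemma slope_bounds {G G' : ℝ → ℝ}
    (hgv : ∀ b, HasDerivAt G (G' b) b)
    (hb : ∀ b, gmin ≤ G' b ∧ G' b ≤ L₄) :
    ∀ {x y : ℝ}, x ≠ y →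
      gmin ≤ (G y - G x) / (y - x) ∧ (G y - G x) / (y - x) ≤ L₄ := by
  have main : ∀ x y : ℝ, x < y →
      gmin ≤ (G y - G x) / (y - x) ∧ (G y - G x) / (y - x) ≤ L₄ := by
    intro x y hxy
    obtain ⟨ξ, _, hξ⟩ := exists_hasDerivAt_eq_slope G G' hxy
      (fun z _ => (hgv z).continuousAt.continuousWithinAt) (fun z _ => hgv z)
    rw [← hξ]; exact hb ξ
  intro x y hxy
  rcases lt_or_gt_of_ne hxy with h | h
  · exact main x y h
  · have e : (G y - G x) / (y - x) = (G x - G y) / (x - y) := by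
      rw [← neg_sub (G x) (G y), ← neg_sub x y, neg_div_neg_eq]
    rw [e]; exact main y x h

private lemma prod_bounds {G G' : ℝ → ℝ}
    (hgv : ∀ b, HasDerivAt G (G' b) b)
    (hb : ∀ b, gmin ≤ G' b ∧ G' b ≤ L₄) (a b : ℝ) :
    gmin * (b - a) ^ 2 ≤ (G b - G a) * (b - a) ∧
      (G b - G a) * (b - a) ≤ L₄ * (b - a) ^ 2 := by
  rcases eq_or_ne a b with rfl | hab
  · simp
  · obtain ⟨h1, h2⟩ := slope_bounds hgv hb hab
    have hba : b - a ≠ 0 := sub_ne_zero.mpr (Ne.symm hab)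
    have e : (G b - G a) * (b - a) = ((G b - G a) / (b - a)) * (b - a) ^ 2 := by
      field_simp
    constructor
    · rw [e]; nlinarith [sq_nonneg (b - a)]
    · rw [e]; nlinarith [sq_nonneg (b - a)]

/-- Key comparison lemma: two solutions of `v' = f t - G v` on `[0,1]` whose initial values
    differ stay apart, contract, and satisfy an exact exponential formula at time 1. -/
private lemma key (hgmin : 0 < gmin) (hL₄ : gmin ≤ L₄) {G G' : ℝ → ℝ}
    (hgv : ∀ b, HasDerivAt G (G' b) b)
    (hb : ∀ b, gmin ≤ G' b ∧ G' b ≤ L₄)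
    (f : ℝ → ℝ) (x y : ℝ → ℝ)
    (hx : ∀ t ∈ Icc (0:ℝ) 1, HasDerivAt x (f t - G (x t)) t)
    (hy : ∀ t ∈ Icc (0:ℝ) 1, HasDerivAt y (f t - G (y t)) t)
    (h0 : y 0 - x 0 ≠ 0) :
    (∀ s ∈ Icc (0:ℝ) 1, y s - x s ≠ 0 ∧ (y s - x s) ^ 2 ≤ (y 0 - x 0) ^ 2) ∧
    gmin ≤ (∫ s in (0:ℝ)..1, (G (y s) - G (x s)) / (y s - x s)) ∧
    (∫ s in (0:ℝ)..1, (G (y s) - G (x s)) / (y s - x s)) ≤ L₄ ∧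
    y 1 - x 1 =
      (y 0 - x 0) * Real.exp (-(∫ s in (0:ℝ)..1, (G (y s) - G (x s)) / (y s - x s))) := by
  set u : ℝ → ℝ := fun t => y t - x t with hu_def
  have hu : ∀ t ∈ Icc (0:ℝ) 1, HasDerivAt u (-(G (y t) - G (x t))) t := by
    intro t ht
    have h := (hy t ht).sub (hx t ht)
    exact h.congr_deriv (by ring)
  have hGc : Continuous G := by
    rw [continuous_iff_continuousAt]; exact fun b => (hgv b).continuousAt
  have hxc : ContinuousOn x (Icc 0 1) := fun t ht => (hx t ht).continuousAt.continuousWithinAt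
  have hyc : ContinuousOn y (Icc 0 1) := fun t ht => (hy t ht).continuousAt.continuousWithinAt
  have huc : ContinuousOn u (Icc 0 1) := hyc.sub hxc
  -- derivative of (u t)^2 * exp (a * t)
  have hDt : ∀ a : ℝ, ∀ t ∈ Icc (0:ℝ) 1,
      HasDerivAt (fun s => (u s) ^ 2 * Real.exp (a * s))
        (Real.exp (a * t) * (2 * u t * (-(G (y t) - G (x t))) + a * (u t) ^ 2)) t := by
    intro a t ht
    have h1 : HasDerivAt (fun s => (u s) ^ 2) (2 * u t * (-(G (y t) - G (x t)))) t := by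
      have h := (hu t ht).pow 2
      exact h.congr_deriv (by norm_num)
    have h2 : HasDerivAt (fun s => Real.exp (a * s)) (Real.exp (a * t) * a) t := by
      have h := ((hasDerivAt_id t).const_mul a).exp
      convert h using 1 <;> simp [mul_comm]
    have h := h1.mul h2
    exact h.congr_deriv (by ring)
  -- u never vanishes and contracts
  have hmain : ∀ s ∈ Icc (0:ℝ) 1, u s ≠ 0 ∧ (u s) ^ 2 ≤ (u 0) ^ 2 := by
    have hDm : MonotoneOn (fun s => (u s) ^ 2 * Real.exp (2 * L₄ * s)) (Icc 0 1) := by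
      apply monotoneOn_of_deriv_nonneg (convex_Icc 0 1)
      · exact fun t ht => (hDt (2 * L₄) t ht).continuousAt.continuousWithinAt
      · rw [interior_Icc]
        exact fun t ht => ((hDt (2 * L₄) t (Ioo_subset_Icc_self ht)).differentiableAt).differentiableWithinAt
      · rw [interior_Icc]
        intro t ht
        rw [(hDt (2 * L₄) t (Ioo_subset_Icc_self ht)).deriv]
        have hp := (prod_bounds hgv hb (x t) (y t)).2
        have he := Real.exp_pos (2 * L₄ * t)
        have : 0 ≤ 2 * u t * (-(G (y t) - G (x t))) + 2 * L₄ * (u t) ^ 2 := by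
          simp only [hu_def]; nlinarith
        positivity
    have hEa : AntitoneOn (fun s => (u s) ^ 2 * Real.exp (2 * gmin * s)) (Icc 0 1) := by
      apply antitoneOn_of_deriv_nonpos (convex_Icc 0 1)
      · exact fun t ht => (hDt (2 * gmin) t ht).continuousAt.continuousWithinAt
      · rw [interior_Icc]
        exact fun t ht => ((hDt (2 * gmin) t (Ioo_subset_Icc_self ht)).differentiableAt).differentiableWithinAt
      · rw [interior_Icc]
        intro t ht
        rw [(hDt (2 * gmin) t (Ioo_subset_Icc_self ht)).deriv]
        have hp := (prod_bounds hgv hb (x t) (y t)).1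
        have he := Real.exp_pos (2 * gmin * t)
        have h2 : 2 * u t * (-(G (y t) - G (x t))) + 2 * gmin * (u t) ^ 2 ≤ 0 := by
          simp only [hu_def]; nlinarith
        nlinarith
    intro s hs
    have h0mem : (0:ℝ) ∈ Icc (0:ℝ) 1 := by norm_num
    have hD := hDm h0mem hs hs.1
    have hE := hEa h0mem hs hs.1
    simp only [mul_zero, Real.exp_zero, mul_one] at hD hE
    have he1 : (1:ℝ) ≤ Real.exp (2 * gmin * s) := by
      rw [Real.one_le_exp_iff]
      have := hs.1; positivity
    have hu0 : 0 < (u 0) ^ 2 := by positivity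
    have heL : 0 < Real.exp (2 * L₄ * s) := Real.exp_pos _
    constructor
    · intro hzero
      rw [hzero] at hD; simp at hD; nlinarith
    · nlinarith [sq_nonneg (u s)]
  -- the coefficient c
  set c : ℝ → ℝ := fun s => (G (y s) - G (x s)) / (u s) with hc_def
  have hne : ∀ s ∈ Icc (0:ℝ) 1, u s ≠ 0 := fun s hs => (hmain s hs).1
  have hcont : ContinuousOn c (Icc 0 1) :=
    ((hGc.comp_continuousOn hyc).sub (hGc.comp_continuousOn hxc)).div huc hne
  have hcb : ∀ s ∈ Icc (0:ℝ) 1, gmin ≤ c s ∧ c s ≤ L₄ := by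
    intro s hs
    have hxy : x s ≠ y s := by
      intro h; exact hne s hs (by simp [hu_def, h])
    exact slope_bounds hgv hb hxy
  have hci : IntervalIntegrable c volume 0 1 :=
    ContinuousOn.intervalIntegrable (by rwa [uIcc_of_le zero_le_one])
  have hlb : gmin ≤ ∫ s in (0:ℝ)..1, c s := by
    have h := intervalIntegral.integral_mono_on zero_le_one intervalIntegrable_const hci
      (fun s hs => (hcb s hs).1)
    simpa using h
  have hub : (∫ s in (0:ℝ)..1, c s) ≤ L₄ := by
    have h := intervalIntegral.integral_mono_on zero_le_one hci intervalIntegrable_const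
      (fun s hs => (hcb s hs).2)
    simpa using h
  -- FTC for log |u|
  have hlog : ∀ t ∈ uIcc (0:ℝ) 1, HasDerivAt (fun s => Real.log (u s)) (-(c t)) t := by
    rw [uIcc_of_le zero_le_one]
    intro t ht
    have h := (Real.hasDerivAt_log (hne t ht)).comp t (hu t ht)
    exact h.congr_deriv (by simp only [hc_def]; ring)
  have hFTC : ∫ s in (0:ℝ)..1, -(c s) = Real.log (u 1) - Real.log (u 0) :=
    intervalIntegral.integral_eq_sub_of_hasDerivAt hlog hci.neg
  rw [intervalIntegral.integral_neg] at hFTC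
  have h1mem : (1:ℝ) ∈ Icc (0:ℝ) 1 := by norm_num
  have h0mem : (0:ℝ) ∈ Icc (0:ℝ) 1 := by norm_num
  have hu0 : u 0 ≠ 0 := hne 0 h0mem
  have hu1 : u 1 ≠ 0 := hne 1 h1mem
  have habs : |u 1| = |u 0| * Real.exp (-(∫ s in (0:ℝ)..1, c s)) := by
    calc |u 1| = Real.exp (Real.log (u 1)) := (Real.exp_log_eq_abs hu1).symm
    _ = Real.exp (Real.log (u 0) + -(∫ s in (0:ℝ)..1, c s)) := by
        congr 1; linarith
    _ = Real.exp (Real.log (u 0)) * Real.exp (-(∫ s in (0:ℝ)..1, c s)) := Real.exp_add _ _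
    _ = |u 0| * Real.exp (-(∫ s in (0:ℝ)..1, c s)) := by rw [Real.exp_log_eq_abs hu0]
  have hsgn : 0 < u 0 * u 1 := by
    rcases lt_trichotomy (u 0 * u 1) 0 with hlt | heq | hgt
    · exfalso
      have hivt := intermediate_value_uIcc (f := u) (a := (0:ℝ)) (b := 1)
        (by rwa [uIcc_of_le zero_le_one])
      have h0in : (0:ℝ) ∈ uIcc (u 0) (u 1) := by
        rcases mul_neg_iff.mp hlt with ⟨h1, h2⟩ | ⟨h1, h2⟩
        · exact mem_uIcc.mpr (Or.inr ⟨h2.le, h1.le⟩)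
        · exact mem_uIcc.mpr (Or.inl ⟨h1.le, h2.le⟩)
      obtain ⟨s, hs, hs0⟩ := hivt h0in
      rw [uIcc_of_le zero_le_one] at hs
      exact hne s hs hs0
    · exact absurd heq (mul_ne_zero hu0 hu1)
    · exact hgt
  have hfinal : u 1 = u 0 * Real.exp (-(∫ s in (0:ℝ)..1, c s)) := by
    rcases lt_or_gt_of_ne hu0 with hneg | hpos
    · have h1neg : u 1 < 0 := by nlinarith
      rw [abs_of_neg h1neg, abs_of_neg hneg] at habs
      linarith
    · have h1pos : 0 < u 1 := by nlinarith
      rw [abs_of_pos h1pos, abs_of_pos hpos] at habs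
      linarith
  exact ⟨hmain, hlb, hub, hfinal⟩

end Aux

/-- the period map of the damped ODE is differentiable with derivative in
`[e^{-L₄}, e^{-g_min}]`, hence strictly increasing with a unique fixed point. -/
theorem stmt19
    (gmin L₄ U : ℝ) (hgmin : 0 < gmin) (hL₄ : gmin ≤ L₄)
    (g : ℝ → ℝ → ℝ) (gv : ℝ → ℝ → ℝ) (f : ℝ → ℝ) (hf : Continuous f)
    (hgv : ∀ a b, HasDerivAt (fun y => g a y) (gv a b) b)
    (hgvbd : ∀ a b, gmin ≤ gv a b ∧ gv a b ≤ L₄)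
    -- the flow `w β` with initial value `β` and the period map `F`
    (w : ℝ → ℝ → ℝ) (F : ℝ → ℝ)
    (hw0 : ∀ β, w β 0 = β)
    (hw : ∀ β, ∀ t ∈ Set.Icc (0:ℝ) 1, HasDerivAt (w β) (f t - g U (w β t)) t)
    (hF : ∀ β, F β = w β 1) :
    (∀ β, ∃ d : ℝ, HasDerivAt F d β ∧ Real.exp (-L₄) ≤ d ∧ d ≤ Real.exp (-gmin)) ∧
      StrictMono F ∧ ∃! β : ℝ, F β = β := by
  have hgvU : ∀ b, HasDerivAt (g U) (gv U b) b := fun b => hgv U b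
  have hbU : ∀ b, gmin ≤ gv U b ∧ gv U b ≤ L₄ := fun b => hgvbd U b
  have keyU : ∀ β β' : ℝ, β ≠ β' →
      (∀ s ∈ Set.Icc (0:ℝ) 1, w β' s - w β s ≠ 0 ∧ (w β' s - w β s) ^ 2 ≤ (β' - β) ^ 2) ∧
      gmin ≤ (∫ s in (0:ℝ)..1, (g U (w β' s) - g U (w β s)) / (w β' s - w β s)) ∧
      (∫ s in (0:ℝ)..1, (g U (w β' s) - g U (w β s)) / (w β' s - w β s)) ≤ L₄ ∧
      F β' - F β = (β' - β) *
        Real.exp (-(∫ s in (0:ℝ)..1, (g U (w β' s) - g U (w β s)) / (w β' s - w β s))) := by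
    intro β β' hne
    have h0 : w β' 0 - w β 0 ≠ 0 := by
      rw [hw0, hw0]; exact sub_ne_zero.mpr (Ne.symm hne)
    obtain ⟨h1, h2, h3, h4⟩ := key hgmin hL₄ hgvU hbU f (w β) (w β') (hw β) (hw β') h0
    rw [hw0, hw0] at h1 h4
    rw [hF, hF]
    exact ⟨h1, h2, h3, h4⟩
  -- the derivative statement
  have hderiv : ∀ β, ∃ d : ℝ, HasDerivAt F d β ∧ Real.exp (-L₄) ≤ d ∧ d ≤ Real.exp (-gmin) := by
    intro β
    set I : ℝ := ∫ s in Set.Ioc (0:ℝ) 1, gv U (w β s) with hIdef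
    set J : ℝ → ℝ := fun β' =>
      ∫ s in Set.Ioc (0:ℝ) 1, (g U (w β' s) - g U (w β s)) / (w β' s - w β s) with hJdef
    have hJeq : ∀ β', (∫ s in (0:ℝ)..1, (g U (w β' s) - g U (w β s)) / (w β' s - w β s)) = J β' :=
      fun β' => intervalIntegral.integral_of_le zero_le_one
    have hGc : Continuous (g U) := by
      rw [continuous_iff_continuousAt]; exact fun b => (hgvU b).continuousAt
    have hmem : ∀ᶠ β' in nhdsWithin β {β}ᶜ, β' ≠ β :=
      eventually_mem_nhdsWithin
    -- dominated convergence
    have hJlim : Tendsto J (nhdsWithin β {β}ᶜ) (nhds I) := by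
      apply MeasureTheory.tendsto_integral_filter_of_dominated_convergence (bound := fun _ => L₄)
      · filter_upwards [hmem] with β' hβ'
        have hwc : ∀ γ : ℝ, ContinuousOn (w γ) (Set.Icc 0 1) :=
          fun γ t ht => (hw γ t ht).continuousAt.continuousWithinAt
        have hcont : ContinuousOn
            (fun s => (g U (w β' s) - g U (w β s)) / (w β' s - w β s)) (Set.Icc 0 1) :=
          ((hGc.comp_continuousOn (hwc β')).sub (hGc.comp_continuousOn (hwc β))).div
            ((hwc β').sub (hwc β)) (fun s hs => ((keyU β β' (Ne.symm hβ')).1 s hs).1)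
        exact (hcont.mono Set.Ioc_subset_Icc_self).aestronglyMeasurable measurableSet_Ioc
      · filter_upwards [hmem] with β' hβ'
        rw [MeasureTheory.ae_restrict_iff' measurableSet_Ioc]
        apply MeasureTheory.ae_of_all
        intro s hs
        have hs' := Set.Ioc_subset_Icc_self hs
        have hxy : w β s ≠ w β' s := by
          intro h
          exact ((keyU β β' (Ne.symm hβ')).1 s hs').1 (by rw [h]; ring)
        obtain ⟨hl, hr⟩ := slope_bounds hgvU hbU hxy
        rw [Real.norm_eq_abs, abs_of_pos (lt_of_lt_of_le hgmin hl)]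
        exact hr
      · exact MeasureTheory.integrableOn_const measure_Ioc_lt_top.ne
      · rw [MeasureTheory.ae_restrict_iff' measurableSet_Ioc]
        apply MeasureTheory.ae_of_all
        intro s hs
        have hs' := Set.Ioc_subset_Icc_self hs
        have hslope := hasDerivAt_iff_tendsto_slope.mp (hgvU (w β s))
        have htw : Tendsto (fun β' => w β' s) (nhdsWithin β {β}ᶜ) (nhdsWithin (w β s) {w β s}ᶜ) := by
          rw [tendsto_nhdsWithin_iff]
          constructor
          · rw [tendsto_iff_dist_tendsto_zero]
            apply squeeze_zero' (g := fun β' => |β' - β|)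
            · exact Filter.Eventually.of_forall fun _ => dist_nonneg
            · filter_upwards [hmem] with β' hβ'
              have hsq := ((keyU β β' (Ne.symm hβ')).1 s hs').2
              have h := Real.sqrt_le_sqrt hsq
              rw [Real.sqrt_sq_eq_abs, Real.sqrt_sq_eq_abs] at h
              rw [Real.dist_eq]
              exact h
            · have hcab : Continuous (fun β' : ℝ => |β' - β|) :=
                (continuous_id.sub continuous_const).abs
              have h2 := hcab.tendsto β
              simp only [sub_self, abs_zero] at h2
              exact h2.mono_left nhdsWithin_le_nhds
          · filter_upwards [hmem] with β' hβ'
            have := ((keyU β β' (Ne.symm hβ')).1 s hs').1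
            exact fun h => this (by rw [Set.mem_singleton_iff.mp h]; ring)
        have := hslope.comp htw
        apply this.congr
        intro β'
        simp only [Function.comp_apply, slope_def_field]
    -- slope of F equals exp (-J)
    have hslopeF : ∀ᶠ β' in nhdsWithin β {β}ᶜ,
        Real.exp (-(J β')) = slope F β β' := by
      filter_upwards [hmem] with β' hβ'
      have h4 := (keyU β β' (Ne.symm hβ')).2.2.2
      rw [hJeq] at h4
      rw [slope_def_field, h4]
      have hβne : β' - β ≠ 0 := sub_ne_zero.mpr hβ'
      field_simp
    have hexp : Tendsto (fun β' => Real.exp (-(J β'))) (nhdsWithin β {β}ᶜ)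
        (nhds (Real.exp (-I))) :=
      (Real.continuous_exp.tendsto _).comp hJlim.neg
    have hDF : HasDerivAt F (Real.exp (-I)) β := by
      rw [hasDerivAt_iff_tendsto_slope]
      exact hexp.congr' hslopeF
    have hIlb : gmin ≤ I :=
      ge_of_tendsto hJlim (by
        filter_upwards [hmem] with β' hβ'
        rw [← hJeq]
        exact (keyU β β' (Ne.symm hβ')).2.1)
    have hIub : I ≤ L₄ :=
      le_of_tendsto hJlim (by
        filter_upwards [hmem] with β' hβ'
        rw [← hJeq]
        exact (keyU β β' (Ne.symm hβ')).2.2.1)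
    exact ⟨Real.exp (-I), hDF, Real.exp_le_exp.mpr (by linarith),
      Real.exp_le_exp.mpr (by linarith)⟩
  have hSM : StrictMono F := by
    intro β β' h
    have h4 := (keyU β β' h.ne).2.2.2
    have := Real.exp_pos (-(∫ s in (0:ℝ)..1, (g U (w β' s) - g U (w β s)) / (w β' s - w β s)))
    nlinarith
  refine ⟨hderiv, hSM, ?_⟩
  -- unique fixed point
  have hcontF : Continuous F := by
    rw [continuous_iff_continuousAt]
    intro β
    obtain ⟨d, hd, -⟩ := hderiv β
    exact hd.continuousAt
  obtain ⟨k, hk, hgap⟩ : ∃ k : ℝ, 0 < k ∧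
      ∀ β β' : ℝ, β < β' → F β' - β' ≤ (F β - β) - k * (β' - β) := by
    refine ⟨1 - Real.exp (-gmin), ?_, ?_⟩
    · have : Real.exp (-gmin) < 1 := by
        rw [Real.exp_lt_one_iff]; linarith
      linarith
    · intro β β' h
      obtain ⟨-, h2, -, h4⟩ := keyU β β' h.ne
      have hle : Real.exp (-(∫ s in (0:ℝ)..1, (g U (w β' s) - g U (w β s)) / (w β' s - w β s)))
          ≤ Real.exp (-gmin) := Real.exp_le_exp.mpr (by linarith)
      nlinarith [sub_pos.mpr h]
  have hk0 : k ≠ 0 := ne_of_gt hk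
  obtain ⟨a, b, hab, hφa, hφb⟩ :
      ∃ a b : ℝ, a < b ∧ 0 ≤ F a - a ∧ F b - b ≤ 0 := by
    refine ⟨min (-1) ((F 0 - 0) / k - 1), max 1 ((F 0 - 0) / k + 1), ?_, ?_, ?_⟩
    · have h1 : min (-1) ((F 0 - 0) / k - 1) < 0 :=
        lt_of_le_of_lt (min_le_left _ _) (by norm_num)
      have h2 : (0:ℝ) < max 1 ((F 0 - 0) / k + 1) :=
        lt_of_lt_of_le (by norm_num) (le_max_left _ _)
      linarith
    · have ha0 : min (-1) ((F 0 - 0) / k - 1) < 0 :=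
        lt_of_le_of_lt (min_le_left _ _) (by norm_num)
      have hg := hgap _ 0 ha0
      have hak : min (-1) ((F 0 - 0) / k - 1) ≤ (F 0 - 0) / k - 1 := min_le_right _ _
      have h1 : k * min (-1) ((F 0 - 0) / k - 1) ≤ k * ((F 0 - 0) / k - 1) :=
        mul_le_mul_of_nonneg_left hak hk.le
      have h2 : k * ((F 0 - 0) / k - 1) = (F 0 - 0) - k := by
        field_simp
      linarith
    · have hb0 : (0:ℝ) < max 1 ((F 0 - 0) / k + 1) :=
        lt_of_lt_of_le (by norm_num) (le_max_left _ _)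
      have hg := hgap 0 _ hb0
      have hbk : (F 0 - 0) / k + 1 ≤ max 1 ((F 0 - 0) / k + 1) := le_max_right _ _
      have h1 : k * ((F 0 - 0) / k + 1) ≤ k * max 1 ((F 0 - 0) / k + 1) :=
        mul_le_mul_of_nonneg_left hbk hk.le
      have h2 : k * ((F 0 - 0) / k + 1) = (F 0 - 0) + k := by
        field_simp
      linarith
  obtain ⟨β₀, hβ₀mem, hβ₀⟩ := intermediate_value_Icc' hab.le
    ((hcontF.sub continuous_id).continuousOn (s := Set.Icc a b))
    (Set.mem_Icc.mpr ⟨hφb, hφa⟩)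
  have hβ₀fix : F β₀ = β₀ := by
    have h : F β₀ - β₀ = 0 := hβ₀
    linarith
  refine ⟨β₀, hβ₀fix, ?_⟩
  intro β' hβ'
  by_contra hne
  rcases lt_or_gt_of_ne hne with hlt | hlt
  · have h := hgap β' β₀ hlt
    have hpos := mul_pos hk (sub_pos.mpr hlt)
    rw [hβ', hβ₀fix] at h
    nlinarith
  · have h := hgap β₀ β' hlt
    have hpos := mul_pos hk (sub_pos.mpr hlt)
    rw [hβ', hβ₀fix] at h
    nlinarith
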